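/- For every integer n ≥ 2, the inequality 2√π · n^(2n-1) · (2n-1) / (e · (2n-1)! · √(4n-1)) · (2/e)^(2n-1) ≤ 1 holds. -/

import Mathlib

open Real

lemma sqrt_pi_le_stirlingSeq (n : ℕ) : Real.sqrt π ≤ Stirling.stirlingSeq (n + 1) := by
  refine le_of_tendsto Stirling.tendsto_stirlingSeq_sqrt_pi ?_
  filter_upwards [Filter.eventually_ge_atTop (n + 1)] with k hk
  obtain ⟨j, rfl⟩ : ∃ j, k = j + 1 := ⟨k - 1, by omega⟩
  simpa [Function.comp] using Stirling.stirlingSeq'_antitone (by omega : n ≤ j)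

lemma stirling_lower (m : ℕ) (hm : 1 ≤ m) :
    Real.sqrt π * (Real.sqrt (2 * m) * ((m : ℝ) / Real.exp 1) ^ m) ≤ (m.factorial : ℝ) := by
  obtain ⟨k, rfl⟩ : ∃ k, m = k + 1 := ⟨m - 1, by omega⟩
  have h := sqrt_pi_le_stirlingSeq k
  unfold Stirling.stirlingSeq at h
  have hpos : (0:ℝ) < Real.sqrt (2 * ((k:ℝ)+1)) * (((k:ℝ)+1) / Real.exp 1) ^ (k+1) := by
    positivity
  have h' := mul_le_mul_of_nonneg_right h hpos.le
  calc Real.sqrt π * (Real.sqrt (2 * ((k+1:ℕ):ℝ)) * (((k+1:ℕ) : ℝ) / Real.exp 1) ^ (k+1))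
      ≤ ((k+1).factorial : ℝ) / (Real.sqrt (2 * ((k+1:ℕ):ℝ)) * (((k+1:ℕ):ℝ) / Real.exp 1) ^ (k+1)) *
        (Real.sqrt (2 * ((k+1:ℕ):ℝ)) * (((k+1:ℕ) : ℝ) / Real.exp 1) ^ (k+1)) := by
        push_cast
        convert h' using 3 <;> push_cast <;> rfl
    _ = ((k+1).factorial : ℝ) := by
        push_cast
        exact div_mul_cancel₀ _ (by push_cast at hpos; exact hpos.ne')

theorem stmt_1 (n : ℕ) (hn : 2 ≤ n) :
    2 * Real.sqrt π * (n : ℝ) ^ (2 * n - 1) * (2 * (n : ℝ) - 1) /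
        (Real.exp 1 * (Nat.factorial (2 * n - 1) : ℝ) * Real.sqrt (4 * (n : ℝ) - 1)) *
        (2 / Real.exp 1) ^ (2 * n - 1) ≤ 1 := by
  set m : ℕ := 2 * n - 1 with hm
  have hm1 : 1 ≤ m := by omega
  set e1 : ℝ := Real.exp 1 with he1
  have he1pos : (0:ℝ) < e1 := Real.exp_pos 1
  set M : ℝ := (m : ℝ) with hMdef
  have hMval : M = 2 * (n : ℝ) - 1 := by
    rw [hMdef, hm]
    push_cast [Nat.cast_sub (by omega : 1 ≤ 2 * n)]
    ring
  have h2n : (2:ℝ) ≤ (n:ℝ) := by exact_mod_cast hn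
  have hMpos : (0:ℝ) < M := by rw [hMval]; linarith
  have h4n : 4 * (n : ℝ) - 1 = 2 * M + 1 := by rw [hMval]; ring
  rw [h4n]
  have hDpos : (0:ℝ) < e1 * (m.factorial : ℝ) * Real.sqrt (2 * M + 1) := by
    have : (0:ℝ) < Real.sqrt (2 * M + 1) := Real.sqrt_pos.mpr (by linarith)
    positivity
  rw [div_mul_eq_mul_div, div_le_one hDpos, ← hMval]
  -- key facts
  have h1 : Real.sqrt π * (Real.sqrt (2 * M) * (M / e1) ^ m) ≤ (m.factorial : ℝ) :=
    stirling_lower m hm1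
  have hb : (M + 1) / M ≤ Real.exp (1 / M) := by
    have h := Real.add_one_le_exp (1 / M)
    have heq : (M + 1) / M = 1 / M + 1 := by field_simp; ring
    rw [heq]; exact h
  have hc : ((M + 1) / M) ^ m ≤ Real.exp (1 / M) ^ m :=
    pow_le_pow_left₀ (by positivity) hb m
  have hd : Real.exp (1 / M) ^ m = e1 := by
    rw [← Real.exp_nat_mul, he1]
    congr 1
    rw [← hMdef]
    field_simp
  have h3 : ((M + 1) / e1) ^ m ≤ (M / e1) ^ m * e1 := by
    have ha : (M + 1) / e1 = (M / e1) * ((M + 1) / M) := by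
      field_simp
    rw [ha, mul_pow]
    have := mul_le_mul_of_nonneg_left (hc.trans_eq hd) (by positivity : (0:ℝ) ≤ (M / e1) ^ m)
    linarith
  have h4 : 2 * M ≤ Real.sqrt (2 * M) * Real.sqrt (2 * M + 1) := by
    rw [← Real.sqrt_mul (by linarith)]
    refine Real.le_sqrt' (by linarith) |>.mpr ?_
    nlinarith
  have hn2 : (n : ℝ) * (2 / e1) = (M + 1) / e1 := by
    rw [hMval]; field_simp; ring
  calc 2 * Real.sqrt π * (n:ℝ) ^ m * M * (2 / e1) ^ m
      = 2 * M * Real.sqrt π * ((n:ℝ) * (2 / e1)) ^ m := by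
        rw [mul_pow, hMval]; ring
    _ = 2 * M * Real.sqrt π * ((M + 1) / e1) ^ m := by rw [hn2]
    _ ≤ 2 * M * Real.sqrt π * ((M / e1) ^ m * e1) := by
        apply mul_le_mul_of_nonneg_left h3 (by positivity)
    _ = (2 * M) * (Real.sqrt π * (M / e1) ^ m * e1) := by ring
    _ ≤ (Real.sqrt (2 * M) * Real.sqrt (2 * M + 1)) * (Real.sqrt π * (M / e1) ^ m * e1) := by
        apply mul_le_mul_of_nonneg_right h4 (by positivity)
    _ = e1 * (Real.sqrt π * (Real.sqrt (2 * M) * (M / e1) ^ m)) * Real.sqrt (2 * M + 1) := by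
        ring
    _ ≤ e1 * (m.factorial : ℝ) * Real.sqrt (2 * M + 1) := by
        apply mul_le_mul_of_nonneg_right _ (Real.sqrt_nonneg _)
        exact mul_le_mul_of_nonneg_left h1 he1pos.le
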